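/- Let p be an odd prime and k ≥ 1 an integer such that p ≡ 1 (mod 4) or k is even. Then the number of elements α of the finite field F_{p^k} for which the polynomial x^4 − α is irreducible over F_{p^k} is exactly (p^k − 1)/2. -/

import Mathlib

open Polynomial

lemma nspow' {F : Type} [Field F] [Fintype F] (h2 : ringChar F ≠ 2) {a : F}
    (hns : ¬ IsSquare a) : a ^ (Fintype.card F / 2) = -1 := by
  have ha : a ≠ 0 := fun h => hns (h ▸ ⟨0, by simp⟩)
  rcases FiniteField.pow_dichotomy h2 ha with h | h
  · exact absurd ((FiniteField.isSquare_iff h2 ha).mpr h) hns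
  · exact h

lemma irred_iff {F : Type} [Field F] [Fintype F] (h4 : 4 ∣ Fintype.card F - 1) (a : F) :
    Irreducible (X ^ 4 - C a : Polynomial F) ↔ ¬ IsSquare a := by
  classical
  set q := Fintype.card F with hq
  have hq2 : 2 ≤ q := Fintype.one_lt_card
  obtain ⟨u, hu⟩ := h4
  have hqu : q = 4 * u + 1 := by omega
  have hu0 : 0 < u := by omega
  have hqodd : q % 2 = 1 := by omega
  have h2 : ringChar F ≠ 2 := fun h => by
    have := FiniteField.even_card_of_char_two (F := F) h
    omega
  have hne : (-1 : F) ≠ 1 := Ring.neg_one_ne_one_of_char_ne_two h2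
  have hm : q / 2 = 2 * u := by omega
  constructor
  · -- irreducible → nonsquare
    rintro hirr ⟨b, rfl⟩
    have hfact : (X ^ 4 - C (b * b) : Polynomial F) = (X ^ 2 - C b) * (X ^ 2 + C b) := by
      rw [map_mul]; ring
    rcases hirr.2 hfact with hu' | hu'
    · have := natDegree_eq_zero_of_isUnit hu'
      rw [natDegree_X_pow_sub_C] at this; omega
    · have := natDegree_eq_zero_of_isUnit hu'
      have h2' : (X ^ 2 + C b : Polynomial F) = X ^ 2 - C (-b) := by rw [map_neg, sub_neg_eq_add]
      rw [h2', natDegree_X_pow_sub_C] at this; omega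
  · -- nonsquare → irreducible
    intro hns
    have ha0 : a ≠ 0 := fun h => hns (h ▸ ⟨0, by simp⟩)
    have ham : a ^ (2 * u) = -1 := by rw [← hm]; exact nspow' h2 hns
    by_contra hni
    set P : Polynomial F := X ^ 4 - C a with hP
    have hPdeg : P.natDegree = 4 := natDegree_X_pow_sub_C
    have hPne : P ≠ 0 := fun h => by simp [h] at hPdeg
    have hPnu : ¬ IsUnit P := fun h => by
      have := natDegree_eq_zero_of_isUnit h; omega
    rw [irreducible_iff] at hni
    push_neg at hni
    obtain ⟨f, g, hfg, hf, hg⟩ := hni hPnu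
    have hf0 : f ≠ 0 := fun h => hPne (by rw [hfg, h, zero_mul])
    have hg0 : g ≠ 0 := fun h => hPne (by rw [hfg, h, mul_zero])
    have hdeg : f.natDegree + g.natDegree = 4 := by
      rw [← natDegree_mul hf0 hg0, ← hfg, hPdeg]
    have hf1 : 1 ≤ f.natDegree := by
      rcases Nat.eq_zero_or_pos f.natDegree with h0 | h; swap; · omega
      exact absurd (isUnit_iff_degree_eq_zero.mpr
        (by rw [degree_eq_natDegree hf0, h0]; rfl)) hf
    have hg1 : 1 ≤ g.natDegree := by
      rcases Nat.eq_zero_or_pos g.natDegree with h0 | h; swap; · omega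
      exact absurd (isUnit_iff_degree_eq_zero.mpr
        (by rw [degree_eq_natDegree hg0, h0]; rfl)) hg
    -- pick a factor of degree ≤ 2
    obtain ⟨f', hf'u, hf'0, hf'dvd, hf'deg⟩ :
        ∃ f' : Polynomial F, ¬ IsUnit f' ∧ f' ≠ 0 ∧ f' ∣ P ∧ f'.natDegree ≤ 2 := by
      rcases le_or_gt f.natDegree 2 with h | h
      · exact ⟨f, hf, hf0, ⟨g, hfg⟩, h⟩
      · exact ⟨g, hg, hg0, ⟨f, by rw [hfg, mul_comm]⟩, by omega⟩
    obtain ⟨r, hr, hrf⟩ := WfDvdMonoid.exists_irreducible_factor hf'u hf'0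
    have hrP : r ∣ P := hrf.trans hf'dvd
    have hr0 : r ≠ 0 := fun h => hf'0 (by rw [h] at hrf; exact zero_dvd_iff.mp hrf)
    have hrdeg2 : r.natDegree ≤ 2 := le_trans (natDegree_le_of_dvd hrf hf'0) hf'deg
    have hrdeg1 : 1 ≤ r.natDegree := hr.natDegree_pos
    haveI : Fact (Irreducible r) := ⟨hr⟩
    set E := AdjoinRoot r with hE
    let pb := AdjoinRoot.powerBasis hr0
    letI : Fintype E := Module.fintypeOfFintype pb.basis
    have hcardE : Fintype.card E = q ^ r.natDegree := by
      rw [Module.card_fintype pb.basis, Fintype.card_fin]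
      rfl
    set β := AdjoinRoot.root r with hβ
    have hβ4 : β ^ 4 = algebraMap F E a := by
      have h0 : aeval β P = 0 := by
        rw [hβ, AdjoinRoot.aeval_eq, AdjoinRoot.mk_eq_zero]; exact hrP
      rw [hP] at h0
      simp only [map_sub, map_pow, aeval_X, aeval_C] at h0
      exact sub_eq_zero.mp h0
    have haE : algebraMap F E a ≠ 0 := fun h =>
      ha0 ((algebraMap F E).injective (by rw [h, map_zero]))
    have hβ0 : β ≠ 0 := fun h => haE (by rw [← hβ4, h, zero_pow]; norm_num)
    have hdvd : Fintype.card E - 1 ∣ q ^ 2 - 1 := by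
      rcases (by omega : r.natDegree = 1 ∨ r.natDegree = 2) with h | h
      · rw [hcardE, h]
        simpa using Nat.sub_dvd_pow_sub_pow q 1 2
      · rw [hcardE, h]
    have hβq : β ^ (q ^ 2 - 1) = 1 := by
      obtain ⟨t, ht⟩ := hdvd
      rw [ht, pow_mul, FiniteField.pow_card_sub_one_eq_one β hβ0, one_pow]
    have key : (algebraMap F E a) ^ (2 * u * (2 * u + 1)) = -1 :=
      calc (algebraMap F E a) ^ (2 * u * (2 * u + 1))
          = (algebraMap F E (a ^ (2 * u))) ^ (2 * u + 1) := by rw [map_pow, ← pow_mul]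
        _ = (-1 : E) ^ (2 * u + 1) := by rw [ham, map_neg, map_one]
        _ = -1 := Odd.neg_one_pow ⟨u, by ring⟩
    have hexp : 4 * (2 * u * (2 * u + 1)) = q ^ 2 - 1 := by
      have : q ^ 2 = 4 * (2 * u * (2 * u + 1)) + 1 := by rw [hqu]; ring
      omega
    have key2 : (algebraMap F E a) ^ (2 * u * (2 * u + 1)) = 1 := by
      rw [← hβ4, ← pow_mul, hexp, hβq]
    rw [key] at key2
    exact hne ((algebraMap F E).injective (by rw [map_neg, map_one]; exact key2))


lemma count_ns {F : Type} [Field F] [Fintype F] (h4 : 4 ∣ Fintype.card F - 1) :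
    Nat.card {α : F // ¬ IsSquare α} = Fintype.card F / 2 := by
  classical
  set q := Fintype.card F with hq
  have hq2 : 2 ≤ q := Fintype.one_lt_card
  have hq5 : 5 ≤ q := by
    rcases h4 with ⟨t, ht⟩
    rcases Nat.eq_zero_or_pos t with rfl | htp <;> omega
  have hqodd : q % 2 = 1 := by omega
  have h2 : ringChar F ≠ 2 := fun h => by
    have := FiniteField.even_card_of_char_two (F := F) h
    omega
  set m := q / 2 with hm
  have h2m : 2 * m = q - 1 := Nat.two_mul_odd_div_two hqodd
  have hm0 : 0 < m := by omega
  have hne : (-1 : F) ≠ 1 := Ring.neg_one_ne_one_of_char_ne_two h2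
  have hmF : (m : F) ≠ 0 := by
    intro h0
    have hcast : ((2 * m : ℕ) : F) = -1 := by
      have hq0 : ((q : ℕ) : F) = 0 := FiniteField.cast_card_eq_zero F
      rw [h2m, Nat.cast_sub (by omega : 1 ≤ q), Nat.cast_one, hq0, zero_sub]
    rw [Nat.cast_mul, h0, mul_zero] at hcast
    exact one_ne_zero (α := F) (neg_eq_zero.mp hcast.symm)
  -- the set of nonsquares equals the set of m-th roots of -1
  have hset : ∀ α : F, ¬ IsSquare α ↔ α ^ m = -1 := by
    intro α
    constructor
    · exact nspow' h2
    · intro hα hsq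
      have hα0 : α ≠ 0 := by
        intro h0; rw [h0, zero_pow (by omega)] at hα; exact (by simpa using hα.symm)
      rw [FiniteField.isSquare_iff h2 hα0] at hsq
      rw [← hq, ← hm] at hsq
      rw [hsq] at hα
      exact hne hα.symm
  -- primitive m-th root of unity exists
  obtain ⟨g, hg⟩ := IsCyclic.exists_generator (α := Fˣ)
  have hord : orderOf g = q - 1 := by
    rw [orderOf_eq_card_of_forall_mem_zpowers hg, Nat.card_eq_fintype_card, Fintype.card_units]
  have hprim : IsPrimitiveRoot (g : F) (q - 1) := by
    rw [← hord]
    exact (IsPrimitiveRoot.coe_units_iff).mpr (IsPrimitiveRoot.orderOf g)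
  have hprimm : IsPrimitiveRoot ((g : F) ^ 2) m :=
    hprim.pow (by omega) (by omega)
  -- a nonsquare exists
  obtain ⟨b, hb⟩ := FiniteField.exists_nonsquare (F := F) h2
  have hbm : b ^ m = -1 := nspow' h2 hb
  -- count
  have hsep : Separable (X ^ m - C (-1 : F)) :=
    separable_X_pow_sub_C (-1) hmF (neg_ne_zero.mpr one_ne_zero)
  have hnodup : (nthRoots m (-1 : F)).Nodup := by
    rw [nthRoots]; exact nodup_roots hsep
  have hcard : Multiset.card (nthRoots m (-1 : F)) = m := by
    rw [hprimm.card_nthRoots, if_pos ⟨b, hbm⟩]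
  have hsetF : {α : F | ¬ IsSquare α} = ↑(nthRoots m (-1 : F)).toFinset := by
    ext α
    simp only [Set.mem_setOf_eq, Finset.coe_sort_coe, Multiset.mem_toFinset, Finset.mem_coe,
      mem_nthRoots hm0, hset α]
  calc Nat.card {α : F // ¬ IsSquare α}
      = Nat.card {α : F | ¬ IsSquare α} := rfl
    _ = Nat.card ((nthRoots m (-1 : F)).toFinset : Set F) := by rw [hsetF]
    _ = (nthRoots m (-1 : F)).toFinset.card := by
        rw [Nat.card_coe_set_eq, Set.ncard_coe_finset]
    _ = m := by rw [Multiset.toFinset_card_of_nodup hnodup, hcard]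



theorem stmt_12 (p k : ℕ) (hp : p.Prime) (hpodd : Odd p) (hk : 1 ≤ k)
    (h : p % 4 = 1 ∨ Even k)
    (F : Type) [Field F] [Fintype F] (hF : Fintype.card F = p ^ k) :
    Nat.card {α : F // Irreducible (X ^ 4 - C α : Polynomial F)} = (p ^ k - 1) / 2 := by
  have hp2 : 2 ≤ p := hp.two_le
  have hpk1 : 1 ≤ p ^ k := Nat.one_le_pow _ _ (by omega)
  have hmod : p ^ k % 4 = 1 := by
    rcases h with h1 | ⟨j, hj⟩
    · rw [Nat.pow_mod, h1, one_pow]; rfl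
    · have hpodd' : p % 2 = 1 := Nat.odd_iff.mp hpodd
      have hp4 : p % 4 = 1 ∨ p % 4 = 3 := by omega
      have hsq : p ^ 2 % 4 = 1 := by
        rw [Nat.pow_mod]
        rcases hp4 with h' | h' <;> rw [h'] <;> rfl
      have : p ^ k = (p ^ 2) ^ j := by rw [← pow_mul, hj]; ring_nf
      rw [this, Nat.pow_mod, hsq, one_pow]; rfl
  have h4 : 4 ∣ Fintype.card F - 1 := by rw [hF]; omega
  have e : Nat.card {α : F // Irreducible (X ^ 4 - C α : Polynomial F)}
      = Nat.card {α : F // ¬ IsSquare α} :=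
    Nat.card_congr (Equiv.subtypeEquivRight fun a => by rw [irred_iff h4 a])
  rw [e, count_ns h4, hF]
  omega
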